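/- For all integers m ≥ 3 and p ≥ 5, one has 2·d_p(m) > (p−2)(p−1)·d_{⌊p/2⌋}(m), where d_k(m) = (1/k) Σ_{d ∣ k} μ(d) m^{k/d} and ⌊·⌋ denotes the floor function. -/

import Mathlib

open Finset ArithmeticFunction

/-- `dWitt m k` is `(1/k) * ∑_{d ∣ k} μ(d) m^(k/d)`, the dimension of the space of
Lie polynomials of degree `k` on `m` generators (Witt's formula), as a rational number. -/
noncomputable def dWitt (m k : ℕ) : ℚ :=
  (1 / (k : ℚ)) * ∑ d ∈ k.divisors, ((ArithmeticFunction.moebius d : ℤ) : ℚ) * (m : ℚ) ^ (k / d)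

lemma mu2' : (moebius 2 : ℤ) = -1 := moebius_apply_prime (by norm_num)
lemma mu3' : (moebius 3 : ℤ) = -1 := moebius_apply_prime (by norm_num)
lemma mu4' : (moebius 4 : ℤ) = 0 :=
  moebius_eq_zero_of_not_squarefree (fun h => (by norm_num : ¬ IsUnit (2:ℕ)) (h 2 (by norm_num)))
lemma mu5' : (moebius 5 : ℤ) = -1 := moebius_apply_prime (by norm_num)
lemma mu6' : (moebius 6 : ℤ) = 1 := by
  have := isMultiplicative_moebius.map_mul_of_coprime (m := 2) (n := 3) (by norm_num)
  rw [show (2*3 : ℕ) = 6 by norm_num, mu2', mu3'] at this; omega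
lemma mu7' : (moebius 7 : ℤ) = -1 := moebius_apply_prime (by norm_num)
lemma mu8' : (moebius 8 : ℤ) = 0 :=
  moebius_eq_zero_of_not_squarefree (fun h => (by norm_num : ¬ IsUnit (2:ℕ)) (h 2 (by norm_num)))
lemma mu9' : (moebius 9 : ℤ) = 0 :=
  moebius_eq_zero_of_not_squarefree (fun h => (by norm_num : ¬ IsUnit (3:ℕ)) (h 3 (by norm_num)))

lemma geom_bound (m : ℕ) (hm : 3 ≤ m) (n : ℕ) :
    ∑ j ∈ Finset.Icc 1 n, (m:ℚ)^j ≤ (3/2) * (m:ℚ)^n := by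
  have hm' : (3:ℚ) ≤ (m:ℚ) := by exact_mod_cast hm
  induction n with
  | zero => norm_num
  | succ n ih =>
    rw [Finset.sum_Icc_succ_top (by omega)]
    have hpow : (0:ℚ) ≤ (m:ℚ)^n := by positivity
    have h2 : (3/2) * (m:ℚ)^n ≤ (1/2) * (m:ℚ)^(n+1) := by
      rw [pow_succ]; nlinarith
    nlinarith

lemma err_bound (m k : ℕ) (hm : 3 ≤ m) (hk : 2 ≤ k) :
    |∑ d ∈ k.divisors.erase 1, ((moebius d : ℤ) : ℚ) * (m:ℚ)^(k/d)| ≤ (3/2) * (m:ℚ)^(k/2) := by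
  have habs : ∀ d : ℕ, |((moebius d : ℤ) : ℚ)| ≤ 1 := by
    intro d
    have := abs_moebius_le_one (n := d)
    exact_mod_cast (by exact_mod_cast this : |((moebius d : ℤ) : ℚ)| ≤ (1:ℚ))
  calc |∑ d ∈ k.divisors.erase 1, ((moebius d : ℤ) : ℚ) * (m:ℚ)^(k/d)|
      ≤ ∑ d ∈ k.divisors.erase 1, |((moebius d : ℤ) : ℚ) * (m:ℚ)^(k/d)| :=
        Finset.abs_sum_le_sum_abs _ _
    _ ≤ ∑ d ∈ k.divisors.erase 1, (m:ℚ)^(k/d) := by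
        apply Finset.sum_le_sum
        intro d _
        rw [abs_mul, abs_pow, Nat.abs_cast]
        nlinarith [habs d, pow_nonneg (by positivity : (0:ℚ) ≤ (m:ℚ)) (k/d),
          abs_nonneg ((moebius d : ℤ) : ℚ)]
    _ = ∑ j ∈ (k.divisors.erase 1).image (fun d => k / d), (m:ℚ)^j := by
        rw [Finset.sum_image]
        intro a ha b hb hab
        have ha' := Nat.mem_divisors.1 (Finset.mem_of_mem_erase ha)
        have hb' := Nat.mem_divisors.1 (Finset.mem_of_mem_erase hb)
        have : k / (k / a) = k / (k / b) := by rw [show k / a = k / b from hab]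
        rwa [Nat.div_div_self ha'.1 ha'.2, Nat.div_div_self hb'.1 hb'.2] at this
    _ ≤ ∑ j ∈ Finset.Icc 1 (k/2), (m:ℚ)^j := by
        apply Finset.sum_le_sum_of_subset_of_nonneg
        · intro j hj
          obtain ⟨d, hd, rfl⟩ := Finset.mem_image.1 hj
          have hd1 : d ≠ 1 := Finset.ne_of_mem_erase hd
          have hd' := Nat.mem_divisors.1 (Finset.mem_of_mem_erase hd)
          have hd0 : d ≠ 0 := by rintro rfl; exact hd'.2 (Nat.zero_dvd.1 hd'.1)
          have hd2 : 2 ≤ d := by omega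
          refine Finset.mem_Icc.2 ⟨?_, Nat.div_le_div_left hd2 (by omega)⟩
          have := Nat.div_dvd_of_dvd hd'.1
          have hkd : k / d ≠ 0 := by
            refine Nat.div_ne_zero_iff.2 ⟨hd0, ?_⟩
            exact Nat.le_of_dvd (by omega) hd'.1
          exact Nat.one_le_iff_ne_zero.2 hkd
        · intro j _ _; positivity
    _ ≤ (3/2) * (m:ℚ)^(k/2) := geom_bound m hm _

lemma dWitt_split (m k : ℕ) (hk : 1 ≤ k) :
    (k:ℚ) * dWitt m k = (m:ℚ)^k +
      ∑ d ∈ k.divisors.erase 1, ((moebius d : ℤ) : ℚ) * (m:ℚ)^(k/d) := by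
  have hk0 : (k:ℚ) ≠ 0 := by positivity
  rw [dWitt, ← mul_assoc, mul_one_div, div_self hk0, one_mul,
    ← Finset.sum_erase_add _ _ (Nat.one_mem_divisors.2 (by omega))]
  simp [add_comm]

lemma dWitt_lower (m k : ℕ) (hm : 3 ≤ m) (hk : 2 ≤ k) :
    (m:ℚ)^k - (3/2) * (m:ℚ)^(k/2) ≤ (k:ℚ) * dWitt m k := by
  have h := err_bound m k hm hk
  have h2 := dWitt_split m k (by omega)
  rw [abs_le] at h
  linarith [h.1]

lemma dWitt_upper (m k : ℕ) (hm : 3 ≤ m) (hk : 2 ≤ k) :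
    (k:ℚ) * dWitt m k ≤ (m:ℚ)^k + (3/2) * (m:ℚ)^(k/2) := by
  have h := err_bound m k hm hk
  have h2 := dWitt_split m k (by omega)
  rw [abs_le] at h
  linarith [h.2]

lemma three_pow_ge (q : ℕ) (hq : 5 ≤ q) : (8:ℚ) * (q:ℚ)^2 ≤ 3^q := by
  induction q, hq using Nat.le_induction with
  | base => norm_num
  | succ n hn ih =>
    have hn' : (5:ℚ) ≤ (n:ℚ) := by exact_mod_cast hn
    have h3 : (3:ℚ)^(n+1) = 3^n * 3 := pow_succ 3 n
    push_cast
    nlinarith [ih, hn']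

set_option maxHeartbeats 1600000 in
theorem stmt_12 (m p : ℕ) (hm : 3 ≤ m) (hp : 5 ≤ p) :
    2 * dWitt m p > ((p : ℚ) - 2) * ((p : ℚ) - 1) * dWitt m (p / 2) := by
  have hm' : (3:ℚ) ≤ (m:ℚ) := by exact_mod_cast hm
  rcases Nat.lt_or_ge p 10 with hsmall | hbig
  · have hm0 : (0:ℚ) < (m:ℚ) := by linarith
    have h2 : (3:ℚ)^2 ≤ (m:ℚ)^2 := pow_le_pow_left₀ (by norm_num) hm' 2
    have h3 : (3:ℚ)^3 ≤ (m:ℚ)^3 := pow_le_pow_left₀ (by norm_num) hm' 3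
    have h4 : (3:ℚ)^4 ≤ (m:ℚ)^4 := pow_le_pow_left₀ (by norm_num) hm' 4
    have h5 : (3:ℚ)^5 ≤ (m:ℚ)^5 := pow_le_pow_left₀ (by norm_num) hm' 5
    have p2 : (0:ℚ) ≤ (m:ℚ)^2 := by positivity
    have p3 : (0:ℚ) ≤ (m:ℚ)^3 := by positivity
    have p4 : (0:ℚ) ≤ (m:ℚ)^4 := by positivity
    interval_cases p
    · -- p = 5
      rw [show (5:ℕ)/2 = 2 from rfl,
        dWitt, dWitt, show Nat.divisors 5 = {1,5} from by decide,
        show Nat.divisors 2 = {1,2} from by decide]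
      norm_num [Finset.sum_insert, Finset.mem_singleton, mu2', mu5', moebius_apply_one]
      nlinarith [mul_le_mul_of_nonneg_right h3 p2]
    · -- p = 6
      rw [show (6:ℕ)/2 = 3 from rfl,
        dWitt, dWitt, show Nat.divisors 6 = {1,2,3,6} from by decide,
        show Nat.divisors 3 = {1,3} from by decide]
      norm_num [Finset.sum_insert, Finset.mem_insert, Finset.mem_singleton, mu2', mu3', mu6',
        moebius_apply_one]
      nlinarith [mul_le_mul_of_nonneg_right h3 p3, mul_le_mul_of_nonneg_right h3 p2]
    · -- p = 7
      rw [show (7:ℕ)/2 = 3 from rfl,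
        dWitt, dWitt, show Nat.divisors 7 = {1,7} from by decide,
        show Nat.divisors 3 = {1,3} from by decide]
      norm_num [Finset.sum_insert, Finset.mem_singleton, mu3', mu7', moebius_apply_one]
      nlinarith [mul_le_mul_of_nonneg_right h4 p3, mul_le_mul_of_nonneg_right h3 p2]
    · -- p = 8
      rw [show (8:ℕ)/2 = 4 from rfl,
        dWitt, dWitt, show Nat.divisors 8 = {1,2,4,8} from by decide,
        show Nat.divisors 4 = {1,2,4} from by decide]
      norm_num [Finset.sum_insert, Finset.mem_insert, Finset.mem_singleton, mu2', mu4', mu8',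
        moebius_apply_one]
      nlinarith [mul_le_mul_of_nonneg_right h4 p4, mul_le_mul_of_nonneg_right h4 p2]
    · -- p = 9
      rw [show (9:ℕ)/2 = 4 from rfl,
        dWitt, dWitt, show Nat.divisors 9 = {1,3,9} from by decide,
        show Nat.divisors 4 = {1,2,4} from by decide]
      norm_num [Finset.sum_insert, Finset.mem_insert, Finset.mem_singleton, mu2', mu3', mu4',
        mu9', moebius_apply_one]
      nlinarith [mul_le_mul_of_nonneg_right h5 p4, mul_le_mul_of_nonneg_right h4 p2]
  · -- p ≥ 10
    obtain ⟨q, hq⟩ : ∃ q, q = p / 2 := ⟨_, rfl⟩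
    rw [← hq]
    have hq5 : 5 ≤ q := by omega
    have hp2q : 2 * q ≤ p := by omega
    have hp2q1 : p ≤ 2 * q + 1 := by omega
    have hm0 : (0:ℚ) < (m:ℚ) := by linarith
    have hp0 : (0:ℚ) < (p:ℚ) := by exact_mod_cast (by omega : 0 < p)
    have hq0 : (0:ℚ) < (q:ℚ) := by exact_mod_cast (by omega : 0 < q)
    obtain ⟨A, hA⟩ : ∃ A : ℚ, A = (m:ℚ)^q := ⟨_, rfl⟩
    have hA0 : (0:ℚ) < A := by rw [hA]; positivity
    -- A ≥ 3^q ≥ 8 q^2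
    have hA3 : (3:ℚ)^q ≤ A := by
      rw [hA]; exact pow_le_pow_left₀ (by norm_num) hm' q
    have hA8 : (8:ℚ) * (q:ℚ)^2 ≤ A := le_trans (three_pow_ge q hq5) hA3
    -- m^p ≥ A^2
    have hmp : A^2 ≤ (m:ℚ)^p := by
      rw [hA, ← pow_mul]
      exact pow_le_pow_right₀ (by linarith) (by omega)
    -- lower bound for p * dWitt m p
    have hlow : (m:ℚ)^p - (3/2) * A ≤ (p:ℚ) * dWitt m p := by
      have := dWitt_lower m p hm (by omega)
      rwa [← hq, ← hA] at this
    -- upper bound for q * dWitt m q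
    have hupp : (q:ℚ) * dWitt m q ≤ (3/2) * A := by
      have h1 := dWitt_upper m q hm (by omega)
      have h2 : (m:ℚ)^(q/2) ≤ (m:ℚ)^(q-1) := pow_le_pow_right₀ (by linarith) (by omega)
      have h3 : (3:ℚ) * (m:ℚ)^(q-1) ≤ (m:ℚ)^q := by
        calc (3:ℚ) * (m:ℚ)^(q-1) ≤ (m:ℚ) * (m:ℚ)^(q-1) := by
              nlinarith [pow_pos hm0 (q-1)]
          _ = (m:ℚ)^q := by rw [← pow_succ']; congr 1; omega
      rw [hA]
      nlinarith [h1, h2, h3]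
    -- combine
    have hdq : dWitt m q ≤ (3/2) * A / q := by
      rw [le_div_iff₀ hq0]; linarith [hupp]
    have hdp : ((m:ℚ)^p - (3/2) * A) / p ≤ dWitt m p := by
      rw [div_le_iff₀ hp0]; linarith [hlow]
    have hpfac : ((p:ℚ) - 2) * ((p:ℚ) - 1) ≥ 0 := by
      have : (10:ℚ) ≤ (p:ℚ) := by exact_mod_cast hbig
      nlinarith
    have hrhs : ((p : ℚ) - 2) * ((p : ℚ) - 1) * dWitt m q ≤
        ((p : ℚ) - 2) * ((p : ℚ) - 1) * ((3/2) * A / q) :=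
      mul_le_mul_of_nonneg_left hdq hpfac
    have hkey : ((p : ℚ) - 2) * ((p : ℚ) - 1) * ((3/2) * A / q) <
        2 * (((m:ℚ)^p - (3/2) * A) / p) := by
      have hpq : (p:ℚ) ≤ 2 * (q:ℚ) + 1 := by exact_mod_cast hp2q1
      have hqp : 2 * (q:ℚ) ≤ (p:ℚ) := by exact_mod_cast hp2q
      have hq5' : (5:ℚ) ≤ (q:ℚ) := by exact_mod_cast hq5
      have hppp : (p:ℚ)^3 - 3*(p:ℚ)^2 + 2*(p:ℚ) ≤ 8*(q:ℚ)^3 - 2*(q:ℚ) := by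
        nlinarith [mul_nonneg (by linarith : (0:ℚ) ≤ 2*(q:ℚ)+1-(p:ℚ))
          (by nlinarith : (0:ℚ) ≤ (p:ℚ)^2 + (p:ℚ)*(2*(q:ℚ)+1) + (2*(q:ℚ)+1)^2
            - 3*(p:ℚ) - 3*(2*(q:ℚ)+1) + 2)]
      rw [show ((p:ℚ)-2)*((p:ℚ)-1)*(3/2*A/(q:ℚ)) = (((p:ℚ)-2)*((p:ℚ)-1)*(3/2*A))/(q:ℚ) by ring,
        show (2:ℚ)*(((m:ℚ)^p - 3/2*A)/(p:ℚ)) = (2*((m:ℚ)^p - 3/2*A))/(p:ℚ) by ring,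
        div_lt_div_iff₀ hq0 hp0]
      nlinarith [mul_le_mul_of_nonneg_left hA8 (by positivity : (0:ℚ) ≤ (q:ℚ)*A),
        mul_le_mul_of_nonneg_left hmp (by positivity : (0:ℚ) ≤ 2*(q:ℚ)),
        mul_le_mul_of_nonneg_left hppp hA0.le,
        mul_pos (mul_pos (mul_pos hq0 hq0) hq0) hA0]
    calc ((p : ℚ) - 2) * ((p : ℚ) - 1) * dWitt m q
        ≤ ((p : ℚ) - 2) * ((p : ℚ) - 1) * ((3/2) * A / q) := hrhs
      _ < 2 * (((m:ℚ)^p - (3/2) * A) / p) := hkey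
      _ ≤ 2 * dWitt m p := by linarith [hdp]
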